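/- Let $X$ be a Banach space and let $f_n : X \to \mathbb{R}\cup\{\infty\}$ be proper lower semicontinuous convex functions such that $\Gamma\text{-}\liminf_n f_n > -\infty$ everywhere and there exists a norm-convergent sequence $(a_n)$ in $X$ with $\limsup_n f_n(a_n) < \infty$. Then for every sequence $(x_n, x_n^*) \in \partial f_n$ with $x_n \to x$ in norm and $x_n^* \rightharpoonup^* x^*$ in the weak-star topology, one has: (a) $\Gamma\text{-}\liminf_n f_n(x) = \liminf_n f_n(x_n)$ and $\Gamma\text{-}\limsup_n f_n(x) = \limsup_n f_n(x_n)$; (b) $(x, x^*) \in \partial^{\mathrm{Fen}}(\Gamma\text{-}\liminf_n f_n) \cap \partial(\Gamma\text{-}\limsup_n f_n)$. -/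
import Mathlib


open Filter Topology

noncomputable section

variable {X : Type*} [NormedAddCommGroup X] [NormedSpace ℝ X]

/-- Fenchel conjugate of `f : X → EReal`, as a function on the dual. -/
def fconj (f : X → EReal) (p : X →L[ℝ] ℝ) : EReal :=
  ⨆ x : X, ((p x : ℝ) : EReal) - f x

/-- `f` is a proper convex lower semicontinuous function with values in `ℝ ∪ {∞}`. -/
def IsPLC (f : X → EReal) : Prop :=
  (∃ x, f x ≠ ⊤) ∧ (∀ x, f x ≠ ⊥) ∧
    Convex ℝ {q : X × ℝ | f q.1 ≤ (q.2 : EReal)} ∧ LowerSemicontinuous f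

/-- Sequential Γ-liminf in the norm topology. -/
def gLiminf (f : ℕ → X → EReal) (x : X) : EReal :=
  ⨅ (u : ℕ → X) (_ : Tendsto u atTop (𝓝 x)), liminf (fun n => f n (u n)) atTop

/-- Sequential Γ-limsup in the norm topology. -/
def gLimsup (f : ℕ → X → EReal) (x : X) : EReal :=
  ⨅ (u : ℕ → X) (_ : Tendsto u atTop (𝓝 x)), limsup (fun n => f n (u n)) atTop

/-- Weak-star convergence of a sequence of continuous linear functionals. -/
def WStarTendsto (u : ℕ → X →L[ℝ] ℝ) (p : X →L[ℝ] ℝ) : Prop :=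
  ∀ x : X, Tendsto (fun n => u n x) atTop (𝓝 (p x))

/-- Sequential Γ-liminf in the weak-star topology of the dual. -/
def gLiminfW (g : ℕ → (X →L[ℝ] ℝ) → EReal) (p : X →L[ℝ] ℝ) : EReal :=
  ⨅ (u : ℕ → X →L[ℝ] ℝ) (_ : WStarTendsto u p), liminf (fun n => g n (u n)) atTop

/-- Sequential Γ-limsup in the weak-star topology of the dual. -/
def gLimsupW (g : ℕ → (X →L[ℝ] ℝ) → EReal) (p : X →L[ℝ] ℝ) : EReal :=
  ⨅ (u : ℕ → X →L[ℝ] ℝ) (_ : WStarTendsto u p), limsup (fun n => g n (u n)) atTop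

/-- Graph of the convex subdifferential. -/
def subdiff (f : X → EReal) : Set (X × (X →L[ℝ] ℝ)) :=
  {q | f q.1 + fconj f q.2 = ((q.2 q.1 : ℝ) : EReal)}

/-- Graph of the Fenchel subdifferential of an arbitrary function. -/
def fenSubdiff (g : X → EReal) : Set (X × (X →L[ℝ] ℝ)) :=
  {q | g q.1 ≠ ⊤ ∧ ∀ u : X, ((q.2 u - q.2 q.1 : ℝ) : EReal) + g q.1 ≤ g u}

/-- Moreau envelope. -/
def moreau (f : X → EReal) (lam : ℝ) (x : X) : EReal :=
  ⨅ y : X, f y + ((1 / (2 * lam) * ‖x - y‖ ^ 2 : ℝ) : EReal)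


lemma aux_tendsto {ps : ℕ → X →L[ℝ] ℝ} {p : X →L[ℝ] ℝ} {C : ℝ}
    (hC : ∀ n, ‖ps n‖ ≤ C) (hp : WStarTendsto ps p) {zs : ℕ → X} {z : X}
    (hz : Tendsto zs atTop (𝓝 z)) :
    Tendsto (fun n => ps n (zs n)) atTop (𝓝 (p z)) := by
  have h1 : Tendsto (fun n => ps n (zs n) - ps n z) atTop (𝓝 0) := by
    have hb : ∀ n, ‖ps n (zs n) - ps n z‖ ≤ C * ‖zs n - z‖ := fun n => by
      have h1 := (ps n).le_opNorm (zs n - z)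
      have h2 := mul_le_mul_of_nonneg_right (hC n) (norm_nonneg (zs n - z))
      rw [← map_sub]
      linarith
    have h0 : Tendsto (fun n => C * ‖zs n - z‖) atTop (𝓝 0) := by
      have : Tendsto (fun n => ‖zs n - z‖) atTop (𝓝 0) := by
        simpa using (tendsto_iff_norm_sub_tendsto_zero.1 hz)
      simpa using this.const_mul C
    exact squeeze_zero_norm hb h0
  have := h1.add (hp z)
  simpa using this

lemma subgrad {f : X → EReal} (hf : IsPLC f) {x₀ : X} {p₀ : X →L[ℝ] ℝ}
    (h : (x₀, p₀) ∈ subdiff f) :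
    f x₀ ≠ ⊤ ∧ ∀ u, ((p₀ u - p₀ x₀ : ℝ) : EReal) + f x₀ ≤ f u := by
  obtain ⟨⟨xw, hxw⟩, hbot, -, -⟩ := hf
  have key : ∀ v, ((p₀ v : ℝ) : EReal) - f v ≤ fconj f p₀ := fun v =>
    show _ ≤ ⨆ x, ((p₀ x : ℝ) : EReal) - f x from le_iSup (fun x => ((p₀ x : ℝ) : EReal) - f x) v
  have hconj_bot : fconj f p₀ ≠ ⊥ := by
    have hle := key xw
    lift f xw to ℝ using ⟨hxw, hbot xw⟩ with r hr
    intro hb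
    rw [hb, le_bot_iff, ← EReal.coe_sub] at hle
    exact EReal.coe_ne_bot _ hle
  have hsum : f x₀ + fconj f p₀ = ((p₀ x₀ : ℝ) : EReal) := h
  have hxtop : f x₀ ≠ ⊤ := by
    intro ht
    rw [ht, EReal.top_add_of_ne_bot hconj_bot] at hsum
    exact EReal.coe_ne_top _ hsum.symm
  refine ⟨hxtop, fun u => ?_⟩
  lift f x₀ to ℝ using ⟨hxtop, hbot x₀⟩ with r hr
  have hconj_top : fconj f p₀ ≠ ⊤ := by
    intro ht
    rw [ht] at hsum
    rw [EReal.add_top_of_ne_bot (EReal.coe_ne_bot r)] at hsum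
    exact EReal.coe_ne_top _ hsum.symm
  lift fconj f p₀ to ℝ using ⟨hconj_top, hconj_bot⟩ with s hs
  have hsum' : r + s = p₀ x₀ := by exact_mod_cast hsum
  have hleu := key u
  rcases eq_or_ne (f u) ⊤ with hu | hu
  · rw [hu]; exact le_top
  lift f u to ℝ using ⟨hu, hbot u⟩ with t ht
  rw [← EReal.coe_sub, EReal.coe_le_coe_iff] at hleu
  rw [← EReal.coe_add, EReal.coe_le_coe_iff]
  linarith

/-- Limits of values and subgradients along graphically convergent subdifferential
sequences. -/
theorem stmt11 {X : Type*} [NormedAddCommGroup X] [NormedSpace ℝ X] [CompleteSpace X]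
    (f : ℕ → X → EReal) (hf : ∀ n, IsPLC (f n))
    (hliminf : ∀ x : X, ⊥ < gLiminf f x)
    (a : ℕ → X) (abar : X) (ha : Tendsto a atTop (𝓝 abar))
    (hfa : limsup (fun n => f n (a n)) atTop < ⊤) :
    ∀ (x : X) (p : X →L[ℝ] ℝ) (xs : ℕ → X) (ps : ℕ → X →L[ℝ] ℝ),
      (∀ n, (xs n, ps n) ∈ subdiff (f n)) →
      Tendsto xs atTop (𝓝 x) → WStarTendsto ps p →
      (gLiminf f x = liminf (fun n => f n (xs n)) atTop ∧
        gLimsup f x = limsup (fun n => f n (xs n)) atTop) ∧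
      ((x, p) ∈ fenSubdiff (fun y => gLiminf f y) ∧
        (x, p) ∈ subdiff (fun y => gLimsup f y)) := by
  intro x p xs ps hsub hx hp
  obtain ⟨C, hC⟩ : ∃ C, ∀ n, ‖ps n‖ ≤ C := by
    apply banach_steinhaus
    intro z
    have hbd : BddAbove (Set.range fun n => ‖ps n z‖) := (hp z).norm.bddAbove_range
    obtain ⟨c, hc⟩ := hbd
    exact ⟨c, fun n => hc (Set.mem_range_self n)⟩
  have hsg : ∀ n, f n (xs n) ≠ ⊤ ∧
      ∀ u, ((ps n u - ps n (xs n) : ℝ) : EReal) + f n (xs n) ≤ f n u :=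
    fun n => subgrad (hf n) (hsub n)
  set L := liminf (fun n => f n (xs n)) atTop with hLdef
  set M := limsup (fun n => f n (xs n)) atTop with hMdef
  -- key liminf inequality
  have keyL : ∀ (u : X) (us : ℕ → X), Tendsto us atTop (𝓝 u) →
      ((p u - p x : ℝ) : EReal) + L ≤ liminf (fun n => f n (us n)) atTop := by
    intro u us hus
    have hc : Tendsto (fun n => ps n (us n) - ps n (xs n)) atTop (𝓝 (p u - p x)) :=
      (aux_tendsto hC hp hus).sub (aux_tendsto hC hp hx)
    have h1 : liminf (fun n => ((ps n (us n) - ps n (xs n) : ℝ) : EReal)) atTop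
        = ((p u - p x : ℝ) : EReal) := (EReal.tendsto_coe.2 hc).liminf_eq
    calc ((p u - p x : ℝ) : EReal) + L
        = liminf (fun n => ((ps n (us n) - ps n (xs n) : ℝ) : EReal)) atTop + L := by
          rw [h1]
      _ ≤ liminf ((fun n => ((ps n (us n) - ps n (xs n) : ℝ) : EReal))
            + fun n => f n (xs n)) atTop := EReal.le_liminf_add
      _ ≤ liminf (fun n => f n (us n)) atTop := by
          apply liminf_le_liminf (Eventually.of_forall fun n => ?_)
          exact (hsg n).2 (us n)
  -- key limsup inequality
  have keyM : ∀ (u : X) (us : ℕ → X), Tendsto us atTop (𝓝 u) →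
      ((p u - p x : ℝ) : EReal) + M ≤ limsup (fun n => f n (us n)) atTop := by
    intro u us hus
    have hc : Tendsto (fun n => ps n (us n) - ps n (xs n)) atTop (𝓝 (p u - p x)) :=
      (aux_tendsto hC hp hus).sub (aux_tendsto hC hp hx)
    have h1 : liminf (fun n => ((ps n (us n) - ps n (xs n) : ℝ) : EReal)) atTop
        = ((p u - p x : ℝ) : EReal) := (EReal.tendsto_coe.2 hc).liminf_eq
    calc ((p u - p x : ℝ) : EReal) + M
        = M + liminf (fun n => ((ps n (us n) - ps n (xs n) : ℝ) : EReal)) atTop := by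
          rw [h1, add_comm]
      _ ≤ limsup ((fun n => f n (xs n))
            + fun n => ((ps n (us n) - ps n (xs n) : ℝ) : EReal)) atTop :=
          EReal.le_limsup_add
      _ ≤ limsup (fun n => f n (us n)) atTop := by
          apply limsup_le_limsup (Eventually.of_forall fun n => ?_)
          show f n (xs n) + ((ps n (us n) - ps n (xs n) : ℝ) : EReal) ≤ f n (us n)
          rw [add_comm]
          exact (hsg n).2 (us n)
  have a1 : gLiminf f x = L := by
    apply le_antisymm
    · exact iInf₂_le xs hx
    · refine le_iInf₂ fun us hus => ?_
      have := keyL x us hus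
      simpa using this
  have a2 : gLimsup f x = M := by
    apply le_antisymm
    · exact iInf₂_le xs hx
    · refine le_iInf₂ fun us hus => ?_
      have := keyM x us hus
      simpa using this
  have hMtop : M ≠ ⊤ := by
    intro hM
    have h := keyM abar a ha
    rw [hM, EReal.add_top_of_ne_bot (EReal.coe_ne_bot _)] at h
    exact absurd (h.trans_lt hfa) (lt_irrefl _)
  have hLbot : ⊥ < L := a1 ▸ hliminf x
  have hLM : L ≤ M := liminf_le_limsup
  have hLtop : L ≠ ⊤ := fun h => hMtop (top_le_iff.1 (h ▸ hLM))
  have hMbot : M ≠ ⊥ := (hLbot.trans_le hLM).ne'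
  -- lower bounds on gLiminf/gLimsup at arbitrary points
  have hLu : ∀ u, ((p u - p x : ℝ) : EReal) + L ≤ gLiminf f u := fun u =>
    le_iInf₂ fun us hus => keyL u us hus
  have hMu : ∀ u, ((p u - p x : ℝ) : EReal) + M ≤ gLimsup f u := fun u =>
    le_iInf₂ fun us hus => keyM u us hus
  refine ⟨⟨a1, a2⟩, ⟨?_, ?_⟩, ?_⟩
  · -- gLiminf f x ≠ ⊤
    show gLiminf f x ≠ ⊤
    rw [a1]; exact hLtop
  · -- Fenchel subdifferential inequality
    intro u
    show ((p u - p x : ℝ) : EReal) + gLiminf f x ≤ gLiminf f u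
    rw [a1]; exact hLu u
  · -- subdiff of gLimsup
    obtain ⟨m, hm⟩ : ∃ m : ℝ, M = (m : EReal) :=
      ⟨M.toReal, (EReal.coe_toReal hMtop hMbot).symm⟩
    have hconj : fconj (fun y => gLimsup f y) p = ((p x - m : ℝ) : EReal) := by
      apply le_antisymm
      · refine iSup_le fun u => ?_
        show ((p u : ℝ) : EReal) - gLimsup f u ≤ ((p x - m : ℝ) : EReal)
        rcases eq_or_ne (gLimsup f u) ⊤ with hu | hu
        · rw [hu, EReal.sub_top]; exact bot_le
        · have h2 := hMu u
          rw [hm] at h2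
          have hub : gLimsup f u ≠ ⊥ := by
            intro hb
            rw [hb, le_bot_iff, ← EReal.coe_add] at h2
            exact EReal.coe_ne_bot _ h2
          obtain ⟨s, hs⟩ : ∃ s : ℝ, gLimsup f u = (s : EReal) :=
            ⟨(gLimsup f u).toReal, (EReal.coe_toReal hu hub).symm⟩
          rw [hs] at h2 ⊢
          rw [← EReal.coe_add, EReal.coe_le_coe_iff] at h2
          rw [← EReal.coe_sub, EReal.coe_le_coe_iff]
          linarith
      · have hle : ((p x : ℝ) : EReal) - gLimsup f x
            ≤ fconj (fun y => gLimsup f y) p :=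
          le_iSup (fun u => ((p u : ℝ) : EReal) - gLimsup f u) x
        rw [a2, hm, ← EReal.coe_sub] at hle
        exact hle
    show gLimsup f x + fconj (fun y => gLimsup f y) p = ((p x : ℝ) : EReal)
    rw [a2, hm, hconj, ← EReal.coe_add]
    norm_num
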